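/- For every α ∈ [0,1) and λ > 2, the function F₂(λ,α) := 1 + 2α + (1-α)²/(λ-α) - ((2α-λ) + √((2α-λ)² - 4(1-α)²))/2 satisfies ∂F₂/∂λ < 0, i.e., λ ↦ F₂(λ,α) is strictly decreasing on (2,∞). -/

import Mathlib

lemma aux_hd (α l : ℝ) (hα0 : 0 ≤ α) (hα1 : α < 1) (hl : 2 < l) :
    HasDerivAt (fun l : ℝ => 1 + 2*α + (1-α)^2/(l - α) -
        ((2*α - l) + Real.sqrt ((2*α - l)^2 - 4*(1-α)^2))/2)
      ((-1 / (l - α)^2 * (1-α)^2) -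
        (-1 + (↑2 * (2*α - l)^(2-1) * (-1)) / (2 * Real.sqrt ((2*α - l)^2 - 4*(1-α)^2)))/2) l := by
  have hne : l - α ≠ 0 := by nlinarith
  have hgpos : 0 < (2*α - l)^2 - 4*(1-α)^2 := by nlinarith
  have hinv : HasDerivAt (fun x : ℝ => (1-α)^2 / (x - α))
      (-1 / (l - α)^2 * (1-α)^2) l := by
    have h1 : HasDerivAt (fun x : ℝ => (x - α)⁻¹) (-1 / (l - α)^2) l := by
      exact ((hasDerivAt_id l).sub_const α).inv hne
    simpa [div_eq_inv_mul, mul_comm] using h1.const_mul ((1-α)^2)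
  have hg : HasDerivAt (fun x : ℝ => (2*α - x)^2 - 4*(1-α)^2)
      (↑2 * (2*α - l)^(2-1) * (-1)) l := by
    have h0 : HasDerivAt (fun x : ℝ => 2*α - x) (-1) l := by
      simpa using (hasDerivAt_id l).const_sub (2*α)
    exact (h0.pow 2).sub_const _
  have hsqrt := hg.sqrt hgpos.ne'
  have hlin : HasDerivAt (fun x : ℝ => 2*α - x) (-1) l := by
    simpa using (hasDerivAt_id l).const_sub (2*α)
  have hsum := ((hlin.add hsqrt).div_const 2)
  have := (hinv.const_add (1 + 2*α)).sub hsum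
  exact this


theorem stmt_11 (α : ℝ) (hα : α ∈ Set.Ico (0:ℝ) 1) :
    (∀ l : ℝ, 2 < l →
      deriv (fun l : ℝ => 1 + 2*α + (1-α)^2/(l - α) -
        ((2*α - l) + Real.sqrt ((2*α - l)^2 - 4*(1-α)^2))/2) l < 0) ∧
    StrictAntiOn
      (fun l : ℝ => 1 + 2*α + (1-α)^2/(l - α) -
        ((2*α - l) + Real.sqrt ((2*α - l)^2 - 4*(1-α)^2))/2)
      (Set.Ioi 2) := by
  obtain ⟨hα0, hα1⟩ := hα
  have key : ∀ l : ℝ, 2 < l →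
      deriv (fun l : ℝ => 1 + 2*α + (1-α)^2/(l - α) -
        ((2*α - l) + Real.sqrt ((2*α - l)^2 - 4*(1-α)^2))/2) l < 0 := by
    intro l hl
    have hd := aux_hd α l hα0 hα1 hl
    rw [hd.deriv]
    set s := Real.sqrt ((2*α - l)^2 - 4*(1-α)^2) with hs_def
    have hgpos : 0 < (2*α - l)^2 - 4*(1-α)^2 := by nlinarith
    have hs : 0 < s := Real.sqrt_pos.mpr hgpos
    have hslt : s < l - 2*α := by
      have h1 : s < Real.sqrt ((l - 2*α)^2) := by
        apply Real.sqrt_lt_sqrt hgpos.le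
        nlinarith
      rwa [Real.sqrt_sq (by nlinarith)] at h1
    have hsimp : (↑2 * (2*α - l)^(2-1) * (-1)) / (2 * s) = (l - 2*α)/s := by
      norm_num
      field_simp
      ring
    rw [hsimp]
    have hB : 1 < (l - 2*α)/s := (one_lt_div hs).mpr hslt
    have hX : 0 < 1/(l - α)^2 * (1-α)^2 := by
      apply mul_pos
      · apply div_pos one_pos; nlinarith
      · nlinarith
    have hE : -1/(l - α)^2 * (1-α)^2 = -(1/(l - α)^2 * (1-α)^2) := by ring
    rw [hE]
    linarith
  refine ⟨key, ?_⟩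
  apply StrictAntiOn.mono (s := Set.Ioi 2) ?_ le_rfl
  apply strictAntiOn_of_deriv_neg (convex_Ioi 2)
  · intro x hx
    exact (aux_hd α x hα0 hα1 hx).differentiableAt.continuousAt.continuousWithinAt
  · intro x hx
    rw [interior_Ioi] at hx
    exact key x hx
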